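/- Fix a set Y of distinct ℓ-bit integers with |Y| ≤ ℓ^(β/2) for some constant β > 0, and suppose the set P of primes in the interval [ℓ^(1+β/2), 2ℓ^(1+β/2)] has size at least ℓ^(1+β/2)/((1+β/2)·log₂ ℓ). Then for a uniformly random prime p from P, with probability at least 3/4, the residue set (Y mod p) has size at least c·|Y| for some absolute constant c > 0 (for all sufficiently large ℓ). -/

import Mathlib

open scoped Classical



/-- Sum of squares of fiber sizes equals the number of pairs with equal image. -/
lemma aux_sum_sq_fiber {α β : Type*} [DecidableEq α] [DecidableEq β]
    (Y : Finset α) (f : α → β) :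
    ((Y ×ˢ Y).filter (fun q => f q.1 = f q.2)).card
      = ∑ r ∈ Y.image f, ((Y.filter (fun y => f y = r)).card) ^ 2 := by
  rw [Finset.card_eq_sum_card_fiberwise
    (s := (Y ×ˢ Y).filter (fun q => f q.1 = f q.2))
    (f := fun q => f q.1) (t := Y.image f)
    (fun q hq => by
      simp only [Finset.mem_coe, Finset.mem_filter, Finset.mem_product] at hq
      exact Finset.mem_image_of_mem f hq.1.1)]
  refine Finset.sum_congr rfl fun r _ => ?_
  have h : (Y ×ˢ Y).filter (fun q => f q.1 = f q.2 ∧ f q.1 = r)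
      = (Y.filter (fun y => f y = r)) ×ˢ (Y.filter (fun y => f y = r)) := by
    ext q
    simp only [Finset.mem_filter, Finset.mem_product]
    constructor
    · rintro ⟨⟨h1, h2⟩, h3, h4⟩
      exact ⟨⟨h1, h4⟩, ⟨h2, h3 ▸ h4⟩⟩
    · rintro ⟨⟨h1, h2⟩, h3, h4⟩
      exact ⟨⟨h1, h3⟩, h2.trans h4.symm, h2⟩
  rw [Finset.filter_filter, sq, ← Finset.card_product]
  exact congrArg Finset.card h

/-- Cauchy–Schwarz: `|Y|² ≤ |image| * #(equal pairs)`. -/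
lemma aux_cs {α β : Type*} [DecidableEq α] [DecidableEq β] (Y : Finset α) (f : α → β) :
    (Y.card : ℝ) ^ 2 ≤ ((Y.image f).card : ℝ)
      * (((Y ×ˢ Y).filter (fun q => f q.1 = f q.2)).card : ℝ) := by
  have h1 : (Y.card : ℝ) = ∑ r ∈ Y.image f, ((Y.filter (fun y => f y = r)).card : ℝ) := by
    rw [Finset.card_eq_sum_card_image f Y]; push_cast; rfl
  have h2 := sq_sum_le_card_mul_sum_sq
    (s := Y.image f) (f := fun r => ((Y.filter (fun y => f y = r)).card : ℝ))
  rw [h1]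
  calc (∑ r ∈ Y.image f, ((Y.filter (fun y => f y = r)).card : ℝ)) ^ 2
      ≤ ((Y.image f).card : ℝ) * ∑ r ∈ Y.image f,
          ((Y.filter (fun y => f y = r)).card : ℝ) ^ 2 := h2
    _ = _ := by rw [aux_sum_sq_fiber Y f]; push_cast; ring

/-- The diagonal of `Y ×ˢ Y` has `Y.card` elements. -/
lemma aux_diag_card {α : Type*} [DecidableEq α] (Y : Finset α) :
    ((Y ×ˢ Y).filter (fun q => q.1 = q.2)).card = Y.card := by
  rw [show (Y ×ˢ Y).filter (fun q => q.1 = q.2) = Y.image (fun y => (y, y)) by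
    ext q
    simp only [Finset.mem_filter, Finset.mem_product, Finset.mem_image, Prod.ext_iff]
    constructor
    · rintro ⟨⟨h1, _⟩, h3⟩; exact ⟨q.1, h1, rfl, h3⟩
    · rintro ⟨y, hy, h1, h2⟩; exact ⟨⟨h1 ▸ hy, h2 ▸ hy⟩, h1 ▸ h2 ▸ rfl⟩]
  exact Finset.card_image_of_injective _ (fun a b h => (Prod.ext_iff.1 h).1)


/-- Few primes `≥ ℓ^(1+β/2)` can divide a nonzero difference of two `ℓ`-bit numbers. -/
lemma aux_pair_bound (β : ℝ) (hβ : 0 < β) (ℓ : ℕ) (hℓ : 2 ≤ ℓ)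
    (y z : ℤ) (hy0 : 0 ≤ y) (hy1 : y < 2 ^ ℓ) (hz0 : 0 ≤ z) (hz1 : z < 2 ^ ℓ)
    (hne : y ≠ z) (P : Finset ℕ)
    (hP : ∀ p : ℕ, p ∈ P → Nat.Prime p ∧ (ℓ : ℝ) ^ (1 + β / 2) ≤ (p : ℝ)) :
    ((P.filter (fun p : ℕ => y % (p : ℤ) = z % (p : ℤ))).card : ℝ)
      ≤ (ℓ : ℝ) / ((1 + β / 2) * Real.logb 2 ℓ) := by
  set S := P.filter (fun p : ℕ => y % (p : ℤ) = z % (p : ℤ)) with hS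
  set d : ℤ := y - z with hd
  have hd0 : d ≠ 0 := sub_ne_zero.2 hne
  have hdvd : ∀ p ∈ S, p ∣ d.natAbs := by
    intro p hp
    rw [hS, Finset.mem_filter] at hp
    have hmod : (p : ℤ) ∣ z - y := Int.ModEq.dvd hp.2
    have : (p : ℤ) ∣ d := (dvd_sub_comm).1 hmod
    have := Int.natAbs_dvd_natAbs.2 this
    simpa using this
  have hprime : ∀ p ∈ S, Prime p := fun p hp =>
    (hP p (Finset.mem_filter.1 hp).1).1.prime
  have hproddvd : (∏ p ∈ S, p) ∣ d.natAbs :=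
    Finset.prod_primes_dvd _ hprime hdvd
  have habs : d.natAbs < 2 ^ ℓ := by
    have h1 : |d| < (2 : ℤ) ^ ℓ := by
      rw [abs_lt]; constructor <;> [linarith; linarith]
    have : (d.natAbs : ℤ) < (2 : ℤ) ^ ℓ := by rwa [Int.abs_eq_natAbs] at h1
    exact_mod_cast this
  have hprodle : (∏ p ∈ S, p) ≤ d.natAbs :=
    Nat.le_of_dvd (Nat.pos_of_ne_zero (fun h => hd0 (Int.natAbs_eq_zero.1 h))) hproddvd
  -- real chain
  have hℓ1 : (1 : ℝ) < (ℓ : ℝ) := by exact_mod_cast hℓ.trans_lt' one_lt_two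
  have hℓ0 : (0 : ℝ) < (ℓ : ℝ) := zero_lt_one.trans hℓ1
  set A : ℝ := (ℓ : ℝ) ^ (1 + β / 2) with hA
  have hA0 : 0 < A := Real.rpow_pos_of_pos hℓ0 _
  have hpow : A ^ S.card ≤ ((∏ p ∈ S, p : ℕ) : ℝ) := by
    rw [Nat.cast_prod, ← Finset.prod_const]
    exact Finset.prod_le_prod (fun _ _ => hA0.le)
      (fun p hp => (hP p (Finset.mem_filter.1 hp).1).2)
  have hchain : A ^ S.card < (2 : ℝ) ^ ℓ := by
    calc A ^ S.card ≤ ((∏ p ∈ S, p : ℕ) : ℝ) := hpow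
      _ ≤ (d.natAbs : ℝ) := by exact_mod_cast hprodle
      _ < (2 : ℝ) ^ ℓ := by exact_mod_cast habs
  have hlog : (S.card : ℝ) * ((1 + β / 2) * Real.log ℓ) ≤ (ℓ : ℝ) * Real.log 2 := by
    have := Real.log_le_log (by positivity) hchain.le
    rwa [Real.log_pow, Real.log_pow, hA, Real.log_rpow hℓ0] at this
  have hlogℓ : 0 < Real.log ℓ := Real.log_pos hℓ1
  have hlog2 : 0 < Real.log 2 := Real.log_pos one_lt_two
  have hden : 0 < (1 + β / 2) * Real.logb 2 ℓ := by
    apply mul_pos (by linarith)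
    exact Real.logb_pos one_lt_two hℓ1
  rw [le_div_iff₀ hden, Real.logb]
  refine le_of_mul_le_mul_right ?_ hlog2
  have e : (S.card : ℝ) * ((1 + β / 2) * (Real.log ↑ℓ / Real.log 2)) * Real.log 2
      = (S.card : ℝ) * ((1 + β / 2) * Real.log ↑ℓ) := by field_simp
  rw [e]
  exact hlog


open scoped Classical in
/-- With probability at least 3/4 over a random prime `p` from the dense set `P`
of primes in `[ℓ^(1+β/2), 2ℓ^(1+β/2)]`, the residue set `(Y mod p)` has size
`Ω(|Y|)`, for any set `Y` of at most `ℓ^(β/2)` distinct `ℓ`-bit integers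
(for all sufficiently large `ℓ`). -/
theorem residues_large_whp (β : ℝ) (hβ : 0 < β) :
    ∃ c : ℝ, 0 < c ∧ ∃ ℓ₀ : ℕ, ∀ ℓ : ℕ, ℓ₀ ≤ ℓ →
      ∀ Y : Finset ℤ, (∀ y ∈ Y, 0 ≤ y ∧ y < 2 ^ ℓ) →
        ((Y.card : ℝ) ≤ (ℓ : ℝ) ^ (β / 2)) →
      ∀ P : Finset ℕ,
        (∀ p : ℕ, p ∈ P ↔ Nat.Prime p ∧
          (ℓ : ℝ) ^ (1 + β / 2) ≤ (p : ℝ) ∧ (p : ℝ) ≤ 2 * (ℓ : ℝ) ^ (1 + β / 2)) →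
        ((ℓ : ℝ) ^ (1 + β / 2) / ((1 + β / 2) * Real.logb 2 ℓ) ≤ (P.card : ℝ)) →
        (3 / 4 : ℝ) * (P.card : ℝ) ≤
          ((P.filter (fun p : ℕ =>
            c * (Y.card : ℝ) ≤ ((Y.image (fun y => y % (p : ℤ))).card : ℝ))).card : ℝ) := by
  refine ⟨1/9, by norm_num, 2, ?_⟩
  intro ℓ hℓ Y hYb hYc P hP hPc
  by_cases hY0 : Y.card = 0
  · have h1 : P.card ≤ (P.filter (fun p : ℕ =>
        (1/9 : ℝ) * (Y.card : ℝ) ≤ ((Y.image (fun y => y % (p : ℤ))).card : ℝ))).card :=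
      Finset.card_le_card (fun p hp => Finset.mem_filter.2 ⟨hp, by rw [hY0]; simp⟩)
    have h2 : (0:ℝ) ≤ (P.card : ℝ) := Nat.cast_nonneg _
    have h3 := (Nat.cast_le (α := ℝ)).2 h1
    linarith
  -- Main case : Y nonempty
  have hY1 : (1 : ℝ) ≤ (Y.card : ℝ) := by
    exact_mod_cast Nat.one_le_iff_ne_zero.2 hY0
  have hℓ1 : (1:ℝ) < (ℓ : ℝ) := by exact_mod_cast lt_of_lt_of_le one_lt_two hℓ
  have hℓ0 : (0:ℝ) < (ℓ : ℝ) := lt_trans zero_lt_one hℓ1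
  have hL : 0 < Real.logb 2 ℓ := Real.logb_pos one_lt_two hℓ1
  have hb2 : (0:ℝ) < 1 + β / 2 := by linarith
  set D : ℝ := (ℓ : ℝ) / ((1 + β / 2) * Real.logb 2 ℓ) with hDdef
  have hD0 : 0 ≤ D := by rw [hDdef]; positivity
  have hYD : (Y.card : ℝ) * D ≤ (P.card : ℝ) := by
    calc (Y.card : ℝ) * D ≤ (ℓ:ℝ) ^ (β/2) * D := mul_le_mul_of_nonneg_right hYc hD0
      _ = (ℓ:ℝ) ^ (1 + β/2) / ((1 + β/2) * Real.logb 2 ℓ) := by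
          rw [hDdef, Real.rpow_add hℓ0, Real.rpow_one]; ring
      _ ≤ (P.card : ℝ) := hPc
  set S : ℕ → ℕ := fun p : ℕ =>
    ((Y ×ˢ Y).filter (fun q : ℤ × ℤ => q.1 % (p:ℤ) = q.2 % (p:ℤ))).card with hSdef
  -- double counting
  have hswap : ∑ p ∈ P, S p
      = ∑ q ∈ Y ×ˢ Y, (P.filter (fun p : ℕ => q.1 % (p:ℤ) = q.2 % (p:ℤ))).card := by
    simp only [hSdef, Finset.card_filter]
    exact Finset.sum_comm
  have hsum : ∑ p ∈ P, (S p : ℝ) ≤ (Y.card:ℝ) * P.card + (Y.card:ℝ)^2 * D := by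
    have hcast : ∑ p ∈ P, (S p : ℝ)
        = ∑ q ∈ Y ×ˢ Y, ((P.filter (fun p : ℕ => q.1 % (p:ℤ) = q.2 % (p:ℤ))).card : ℝ) := by
      rw [← Nat.cast_sum, ← Nat.cast_sum, hswap]
    rw [hcast,
      ← Finset.sum_filter_add_sum_filter_not (Y ×ˢ Y) (fun q : ℤ × ℤ => q.1 = q.2)]
    have h1 : ∑ q ∈ (Y ×ˢ Y).filter (fun q : ℤ × ℤ => q.1 = q.2),
        ((P.filter (fun p : ℕ => q.1 % (p:ℤ) = q.2 % (p:ℤ))).card : ℝ)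
        ≤ (Y.card : ℝ) * P.card := by
      calc _ ≤ ∑ _q ∈ (Y ×ˢ Y).filter (fun q : ℤ × ℤ => q.1 = q.2), (P.card : ℝ) :=
            Finset.sum_le_sum (fun q _ => by
              exact_mod_cast Finset.card_filter_le _ _)
        _ = (((Y ×ˢ Y).filter (fun q : ℤ × ℤ => q.1 = q.2)).card : ℝ) * P.card := by
            rw [Finset.sum_const, nsmul_eq_mul]
        _ = (Y.card : ℝ) * P.card := by rw [aux_diag_card]
    have h2 : ∑ q ∈ (Y ×ˢ Y).filter (fun q : ℤ × ℤ => ¬ q.1 = q.2),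
        ((P.filter (fun p : ℕ => q.1 % (p:ℤ) = q.2 % (p:ℤ))).card : ℝ)
        ≤ (Y.card:ℝ)^2 * D := by
      have hterm : ∀ q ∈ (Y ×ˢ Y).filter (fun q : ℤ × ℤ => ¬ q.1 = q.2),
          ((P.filter (fun p : ℕ => q.1 % (p:ℤ) = q.2 % (p:ℤ))).card : ℝ) ≤ D := by
        intro q hq
        obtain ⟨hq1, hq2⟩ := Finset.mem_filter.1 hq
        obtain ⟨hqa, hqb⟩ := Finset.mem_product.1 hq1
        obtain ⟨ha0, ha1⟩ := hYb q.1 hqa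
        obtain ⟨hb0, hb1⟩ := hYb q.2 hqb
        exact aux_pair_bound β hβ ℓ hℓ q.1 q.2 ha0 ha1 hb0 hb1 hq2 P
          (fun p hp => ⟨((hP p).1 hp).1, ((hP p).1 hp).2.1⟩)
      calc _ ≤ ∑ _q ∈ (Y ×ˢ Y).filter (fun q : ℤ × ℤ => ¬ q.1 = q.2), D :=
            Finset.sum_le_sum hterm
        _ = (((Y ×ˢ Y).filter (fun q : ℤ × ℤ => ¬ q.1 = q.2)).card : ℝ) * D := by
            rw [Finset.sum_const, nsmul_eq_mul]
        _ ≤ ((Y.card : ℝ) * Y.card) * D := by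
            refine mul_le_mul_of_nonneg_right ?_ hD0
            have : ((Y ×ˢ Y).filter (fun q : ℤ × ℤ => ¬ q.1 = q.2)).card
                ≤ Y.card * Y.card := le_trans (Finset.card_filter_le _ _)
                  (le_of_eq (Finset.card_product _ _))
            exact_mod_cast this
        _ = (Y.card:ℝ)^2 * D := by ring
    linarith
  -- Markov
  set Bad := P.filter (fun p : ℕ => 9 * (Y.card:ℝ) < (S p : ℝ)) with hBdef
  have hBadP : Bad ⊆ P := Finset.filter_subset _ _
  have hBadcard : (Bad.card : ℝ) ≤ (2/9) * P.card := by
    have h1 : (Bad.card : ℝ) * (9 * (Y.card:ℝ)) ≤ ∑ p ∈ Bad, (S p : ℝ) := by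
      calc (Bad.card : ℝ) * (9 * (Y.card:ℝ)) = ∑ _p ∈ Bad, 9 * (Y.card:ℝ) := by
            rw [Finset.sum_const, nsmul_eq_mul]
        _ ≤ ∑ p ∈ Bad, (S p : ℝ) := Finset.sum_le_sum (fun p hp =>
            (le_of_lt (Finset.mem_filter.1 hp).2))
    have h2 : ∑ p ∈ Bad, (S p : ℝ) ≤ ∑ p ∈ P, (S p : ℝ) :=
      Finset.sum_le_sum_of_subset_of_nonneg hBadP (fun p _ _ => Nat.cast_nonneg _)
    have h3 : (Y.card:ℝ)^2 * D ≤ (Y.card:ℝ) * P.card := by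
      have e : (Y.card:ℝ)^2 * D = (Y.card:ℝ) * ((Y.card:ℝ) * D) := by ring
      rw [e]
      exact mul_le_mul_of_nonneg_left hYD (Nat.cast_nonneg _)
    have h4 : (Bad.card : ℝ) * (9 * (Y.card:ℝ)) ≤ 2 * (Y.card:ℝ) * P.card := by linarith
    have hYpos : (0:ℝ) < (Y.card:ℝ) := by linarith
    have h5 : (Bad.card : ℝ) * 9 ≤ 2 * P.card := by
      refine le_of_mul_le_mul_right ?_ hYpos
      calc (Bad.card : ℝ) * 9 * (Y.card:ℝ) = (Bad.card : ℝ) * (9 * (Y.card:ℝ)) := by ring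
        _ ≤ 2 * (Y.card:ℝ) * P.card := h4
        _ = 2 * P.card * (Y.card:ℝ) := by ring
    linarith
  -- good primes satisfy the conclusion
  have hgood : ∀ p ∈ P, p ∉ Bad →
      (1/9 : ℝ) * (Y.card : ℝ) ≤ ((Y.image (fun y => y % (p : ℤ))).card : ℝ) := by
    intro p hp hnb
    have hSle : (S p : ℝ) ≤ 9 * (Y.card:ℝ) := by
      by_contra h
      exact hnb (Finset.mem_filter.2 ⟨hp, lt_of_not_ge h⟩)
    have hI0 : (0:ℝ) ≤ ((Y.image (fun y => y % (p : ℤ))).card : ℝ) := Nat.cast_nonneg _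
    have hcs : (Y.card : ℝ) ^ 2
        ≤ ((Y.image (fun y => y % (p : ℤ))).card : ℝ) * (S p : ℝ) :=
      aux_cs Y (fun y => y % (p : ℤ))
    have hkey : (Y.card : ℝ) ^ 2
        ≤ ((Y.image (fun y => y % (p : ℤ))).card : ℝ) * (9 * (Y.card:ℝ)) :=
      le_trans hcs (mul_le_mul_of_nonneg_left hSle hI0)
    nlinarith [hY1]
  -- conclude
  have hsub : ((P \ Bad).card : ℝ)
      ≤ ((P.filter (fun p : ℕ =>
          (1/9 : ℝ) * (Y.card : ℝ) ≤ ((Y.image (fun y => y % (p : ℤ))).card : ℝ))).card : ℝ) := by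
    refine (Nat.cast_le (α := ℝ)).2 (Finset.card_le_card (fun p hp => ?_))
    rw [Finset.mem_sdiff] at hp
    exact Finset.mem_filter.2 ⟨hp.1, hgood p hp.1 hp.2⟩
  have hsd : ((P \ Bad).card : ℝ) = (P.card : ℝ) - (Bad.card : ℝ) := by
    rw [Finset.card_sdiff_of_subset hBadP, Nat.cast_sub (Finset.card_le_card hBadP)]
  linarith
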